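/- If f is L-smooth and satisfies the PL inequality (1/2)‖∇f(x)‖² ≥ β(f(x) − f⋆) for all x with β > 0, then gradient descent with step size 0 < t < 2/L satisfies f(x_{k+1}) − f⋆ ≤ (1 + (−2t + Lt²)β)(f(x_k) − f⋆). -/

import Mathlib

open Metric Set Filter

local notation "⟪" x ", " y "⟫_ℝ" => @inner ℝ _ _ x y

noncomputable section

abbrev En (n : ℕ) := EuclideanSpace ℝ (Fin n)

def frechetSubdiff {n : ℕ} (f : En n → ℝ) (x : En n) : Set (En n) :=
  {s | ∀ ε > 0, ∀ᶠ y in nhds x, f x + ⟪s, y - x⟫_ℝ - ε * ‖y - x‖ ≤ f y}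

def convexSubdiff {n : ℕ} (f : En n → ℝ) (x : En n) : Set (En n) :=
  {g | ∀ y, f x + ⟪g, y - x⟫_ℝ ≤ f y}

lemma descent_lemma {n : ℕ} (f : En n → ℝ) (f' : En n → En n) (L : ℝ)
    (hgrad : ∀ x, HasGradientAt f (f' x) x)
    (hlip : ∀ x y, ‖f' x - f' y‖ ≤ L * ‖x - y‖) (x y : En n) :
    f y ≤ f x + ⟪f' x, y - x⟫_ℝ + L / 2 * ‖y - x‖ ^ 2 := by
  set v := y - x with hv
  set g : ℝ → ℝ := fun s => f (x + s • v) - s * ⟪f' x, v⟫_ℝ - L / 2 * s ^ 2 * ‖v‖ ^ 2 with hgdef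
  have hderiv : ∀ s : ℝ, HasDerivAt g
      (⟪f' (x + s • v), v⟫_ℝ - ⟪f' x, v⟫_ℝ - L * s * ‖v‖ ^ 2) s := by
    intro s
    have h1 : HasDerivAt (fun s : ℝ => x + s • v) v s := by
      simpa using ((hasDerivAt_id s).smul_const v).const_add x
    have h2 : HasDerivAt (fun s : ℝ => f (x + s • v)) ⟪f' (x + s • v), v⟫_ℝ s := by
      have := ((hgrad (x + s • v)).hasFDerivAt).comp_hasDerivAt s h1
      simpa [Function.comp_def] using this
    have h3 : HasDerivAt (fun s : ℝ => s * ⟪f' x, v⟫_ℝ) ⟪f' x, v⟫_ℝ s := by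
      simpa using (hasDerivAt_id s).mul_const ⟪f' x, v⟫_ℝ
    have h4 : HasDerivAt (fun s : ℝ => L / 2 * s ^ 2 * ‖v‖ ^ 2) (L * s * ‖v‖ ^ 2) s := by
      have : HasDerivAt (fun s : ℝ => s ^ 2) (2 * s) s := by
        simpa using hasDerivAt_pow 2 s
      have := (this.const_mul (L / 2)).mul_const (‖v‖ ^ 2)
      exact this.congr_deriv (by ring)
    exact (h2.sub h3).sub h4
  have hanti : AntitoneOn g (Icc (0:ℝ) 1) := by
    apply antitoneOn_of_deriv_nonpos (convex_Icc 0 1)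
    · exact fun s _ => (hderiv s).continuousAt.continuousWithinAt
    · exact fun s _ => (hderiv s).differentiableAt.differentiableWithinAt
    · intro s hs
      rw [interior_Icc] at hs
      rw [(hderiv s).deriv]
      have h1 : ⟪f' (x + s • v) - f' x, v⟫_ℝ ≤ ‖f' (x + s • v) - f' x‖ * ‖v‖ :=
        real_inner_le_norm _ _
      have h2 : ‖f' (x + s • v) - f' x‖ ≤ L * (s * ‖v‖) := by
        have := hlip (x + s • v) x
        simpa [norm_smul, abs_of_nonneg hs.1.le, mul_assoc] using this
      have hnv : (0:ℝ) ≤ ‖v‖ := norm_nonneg _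
      have hinner : ⟪f' (x + s • v), v⟫_ℝ - ⟪f' x, v⟫_ℝ ≤ L * s * ‖v‖ ^ 2 := by
        have := inner_sub_left (𝕜 := ℝ) (f' (x + s • v)) (f' x) v
        nlinarith [h1, h2]
      linarith
  have hy : x + v = y := by simp [hv]
  have h0 : g 0 = f x := by simp [hgdef]
  have h1 : g 1 = f y - ⟪f' x, v⟫_ℝ - L / 2 * ‖v‖ ^ 2 := by
    simp [hgdef, hy]
  have := hanti (Set.left_mem_Icc.2 zero_le_one) (Set.right_mem_Icc.2 zero_le_one) zero_le_one
  rw [h0, h1] at this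
  linarith

/-- For L-smooth f satisfying PL, gradient descent with step size
0 < t < 2/L satisfies f(x_{k+1}) − f⋆ ≤ (1 + (−2t + Lt²)β)(f(x_k) − f⋆). -/
theorem gd_linear_cost_under_pl {n : ℕ} (f : En n → ℝ) (f' : En n → En n)
    (L β fstar t : ℝ) (hL : 0 < L) (hβ : 0 < β)
    (hgrad : ∀ x, HasGradientAt f (f' x) x)
    (hlip : ∀ x y, ‖f' x - f' y‖ ≤ L * ‖x - y‖)
    (hlb : ∀ x, fstar ≤ f x) (hmin : ∃ x, f x = fstar)
    (hPL : ∀ x, β * (f x - fstar) ≤ (1 / 2) * ‖f' x‖ ^ 2)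
    (ht0 : 0 < t) (htL : t < 2 / L)
    (x : ℕ → En n) (hiter : ∀ k, x (k + 1) = x k - t • f' (x k)) :
    ∀ k, f (x (k + 1)) - fstar ≤ (1 + (-2 * t + L * t ^ 2) * β) * (f (x k) - fstar) := by
  intro k
  have hdesc := descent_lemma f f' L hgrad hlip (x k) (x (k + 1))
  have hdiff : x (k + 1) - x k = -(t • f' (x k)) := by
    rw [hiter k]; abel
  rw [hdiff] at hdesc
  have hin : ⟪f' (x k), -(t • f' (x k))⟫_ℝ = -t * ‖f' (x k)‖ ^ 2 := by
    rw [inner_neg_right, real_inner_smul_right, real_inner_self_eq_norm_sq]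
    ring
  have hnn : ‖-(t • f' (x k))‖ ^ 2 = t ^ 2 * ‖f' (x k)‖ ^ 2 := by
    rw [norm_neg, norm_smul]
    simp [abs_of_nonneg ht0.le]
    ring
  rw [hin, hnn] at hdesc
  have hPLk := hPL (x k)
  have hcoef : -t + L * t ^ 2 / 2 < 0 := by
    have : L * t < 2 := by
      rw [lt_div_iff₀ hL] at htL; nlinarith
    nlinarith
  have hfk : 0 ≤ f (x k) - fstar := by linarith [hlb (x k)]
  nlinarith [hdesc, hPLk, hcoef, hfk, sq_nonneg ‖f' (x k)‖]
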